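/- For every nonnegative integer k, the generating function identity 1/(q)_k = \sum_{j=0}^{k} q^{j^2} [k choose j]_q * 1/(q)_j holds as an identity of formal power series in q, where (q)_k = \prod_{i=1}^{k}(1-q^i) and [k choose j]_q = (q)_k/((q)_j (q)_{k-j}) is the Gaussian binomial coefficient. -/

import Mathlib

open PowerSeries

/-- `(q)_k = (1-q)(1-q^2)⋯(1-q^k)` as a formal power series over `ℚ`. -/
noncomputable def qpoch (k : ℕ) : PowerSeries ℚ :=
  ∏ i ∈ Finset.range k, (1 - (X : PowerSeries ℚ) ^ (i + 1))

/-- Gaussian binomial coefficient `[k choose j]_q = (q)_k / ((q)_j (q)_{k-j})`. -/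
noncomputable def gauss (k j : ℕ) : PowerSeries ℚ :=
  qpoch k * (qpoch j * qpoch (k - j))⁻¹

section FieldLemma

variable {K : Type*} [Field K]

noncomputable def fp (q : K) (n : ℕ) : K := ∏ i ∈ Finset.range n, (1 - q ^ (i + 1))

lemma fp_zero (q : K) : fp q 0 = 1 := by simp [fp]

lemma fp_succ (q : K) (n : ℕ) : fp q (n + 1) = fp q n * (1 - q ^ (n + 1)) := by
  simp [fp, Finset.prod_range_succ]

lemma fp_ne_zero {q : K} (hq : ∀ i, 1 ≤ i → q ^ i ≠ 1) (n : ℕ) : fp q n ≠ 0 := by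
  refine Finset.prod_ne_zero_iff.2 fun i _ => ?_
  intro h
  exact hq (i + 1) (Nat.le_add_left _ _) (sub_eq_zero.mp h).symm

lemma one_sub_pow_ne_zero {q : K} (hq : ∀ i, 1 ≤ i → q ^ i ≠ 1) {n : ℕ} (hn : 1 ≤ n) :
    (1 : K) - q ^ n ≠ 0 := fun h => hq n hn (sub_eq_zero.mp h).symm

/-- Abstract form of the Pascal-recurrence step. -/
lemma pascal_aux (P a b c α β t s s' t' : K) (ha : a ≠ 0) (hb : b ≠ 0) (hc : c ≠ 0)
    (hα : α ≠ 0) (hβ : β ≠ 0) (hst : s' * t' = s * t) :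
    s * (P * (β + t * α) / (a * α * (b * β))) / c
      = s * (P / (a * α * b)) / c + s' * (t' * (P / (a * (b * β))) / c) := by
  simp only [← mul_div_assoc, div_div]
  rw [div_add_div _ _ (by simp [ha, hb, hc, hα, hβ]) (by simp [ha, hb, hc, hα, hβ]),
    div_eq_div_iff (by simp [ha, hb, hc, hα, hβ]) (by simp [ha, hb, hc, hα, hβ])]
  linear_combination (-(P*β*α^2*a^2*b^2*c^2)) * hst

lemma durfee_gen {q : K} (hq : ∀ i, 1 ≤ i → q ^ i ≠ 1) :
    ∀ k m : ℕ, ∑ j ∈ Finset.range (k + 1),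
        q ^ (j * (j + m)) * (fp q k / (fp q j * fp q (k - j))) / fp q (j + m)
      = 1 / fp q (k + m) := by
  intro k
  induction k with
  | zero => intro m; simp [fp_zero]
  | succ k ih =>
    intro m
    have hne := fp_ne_zero hq
    set F : ℕ → K := fun j =>
      q ^ (j * (j + m)) * (fp q (k + 1) / (fp q j * fp q (k + 1 - j))) / fp q (j + m) with hF
    set G : ℕ → K := fun j =>
      if j ≤ k then q ^ (j * (j + m)) * (fp q k / (fp q j * fp q (k - j))) / fp q (j + m)
      else 0 with hG
    set H : ℕ → K := fun j =>
      if 1 ≤ j then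
        q ^ (k + m + 1) *
          (q ^ ((j - 1) * ((j - 1) + (m + 1))) *
            (fp q k / (fp q (j - 1) * fp q (k - (j - 1)))) / fp q ((j - 1) + (m + 1)))
      else 0 with hH
    have hsplit : ∀ j ∈ Finset.range (k + 2), F j = G j + H j := by
      intro j hj
      have hj' : j < k + 2 := Finset.mem_range.mp hj
      match j with
      | 0 =>
        simp only [hF, hG, hH, if_pos (Nat.zero_le k), if_neg (by omega : ¬ (1:ℕ) ≤ 0)]
        simp [fp_zero, div_self (hne (k+1)), div_self (hne k)]
      | Nat.succ i =>
        simp only [Nat.succ_eq_add_one]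
        have hik : i ≤ k := by omega
        rcases Nat.lt_or_ge i k with hik' | hik'
        · obtain ⟨d, hd⟩ : ∃ d, k = i + 1 + d := ⟨k - (i + 1), by omega⟩
          subst hd
          simp only [hF, hG, hH, if_pos (by omega : i + 1 ≤ i + 1 + d),
            if_pos (by omega : 1 ≤ i + 1)]
          have e1 : i + 1 + d + 1 - (i + 1) = d + 1 := by omega
          have e2 : i + 1 + d - (i + 1) = d := by omega
          have e3 : i + 1 - 1 = i := by omega
          have e4 : i + 1 + d - i = d + 1 := by omega
          have hmm : i + (m + 1) = i + 1 + m := by omega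
          have h1 : fp q (i + 1 + d + 1)
              = fp q (i + 1 + d) * ((1 - q ^ (d + 1)) + q ^ (d + 1) * (1 - q ^ (i + 1))) := by
            rw [fp_succ]
            congr 1
            have hpow : q ^ (i + 1 + d + 1) = q ^ (d + 1) * q ^ (i + 1) := by
              rw [← pow_add]; congr 1; omega
            rw [hpow]; ring
          have h2 : fp q (d + 1) = fp q d * (1 - q ^ (d + 1)) := fp_succ q d
          have h3 : fp q (i + 1) = fp q i * (1 - q ^ (i + 1)) := fp_succ q i
          have hst : q ^ (i + 1 + d + m + 1) * q ^ (i * (i + 1 + m))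
              = q ^ ((i + 1) * (i + 1 + m)) * q ^ (d + 1) := by
            rw [← pow_add, ← pow_add]; congr 1; ring
          rw [e1, e2, e3, e4, hmm, h1, h2, h3]
          exact pascal_aux _ _ _ _ _ _ _ _ _ _ (hne i) (hne d) (hne (i + 1 + m))
            (one_sub_pow_ne_zero hq (by omega)) (one_sub_pow_ne_zero hq (by omega)) hst
        · have hik2 : i = k := by omega
          subst hik2
          simp only [hF, hG, hH, if_neg (by omega : ¬ i + 1 ≤ i),
            if_pos (by omega : 1 ≤ i + 1)]
          have e1 : i + 1 - (i + 1) = 0 := by omega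
          have e3 : i + 1 - 1 = i := by omega
          have e4 : i - i = 0 := by omega
          have hmm : i + (m + 1) = i + 1 + m := by omega
          rw [e1, e3, e4, hmm, fp_zero, mul_one, mul_one, div_self (hne (i + 1)),
            div_self (hne i), zero_add]
          rw [mul_one, mul_one, ← mul_div_assoc, ← pow_add]
          congr 2
          ring
    have hsum : ∑ j ∈ Finset.range (k + 2), F j
        = (∑ j ∈ Finset.range (k + 2), G j) + ∑ j ∈ Finset.range (k + 2), H j := by
      rw [← Finset.sum_add_distrib]
      exact Finset.sum_congr rfl hsplit
    have hGsum : ∑ j ∈ Finset.range (k + 2), G j = 1 / fp q (k + m) := by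
      rw [Finset.sum_range_succ]
      have h0 : G (k + 1) = 0 := by simp [hG]
      rw [h0, add_zero]
      rw [show (∑ j ∈ Finset.range (k + 1), G j)
          = ∑ j ∈ Finset.range (k + 1),
              q ^ (j * (j + m)) * (fp q k / (fp q j * fp q (k - j))) / fp q (j + m) from
        Finset.sum_congr rfl fun j hj => by
          have hjk : j ≤ k := Nat.lt_succ_iff.mp (Finset.mem_range.mp hj)
          simp [hG, if_pos hjk]]
      exact ih m
    have hHsum : ∑ j ∈ Finset.range (k + 2), H j
        = q ^ (k + m + 1) * (1 / fp q (k + (m + 1))) := by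
      rw [Finset.sum_range_succ']
      have h0 : H 0 = 0 := by simp [hH]
      rw [h0, add_zero]
      rw [show (∑ i ∈ Finset.range (k + 1), H (i + 1))
          = ∑ i ∈ Finset.range (k + 1),
              q ^ (k + m + 1) *
                (q ^ (i * (i + (m + 1))) * (fp q k / (fp q i * fp q (k - i))) / fp q (i + (m + 1)))
          from Finset.sum_congr rfl fun i _ => by
            simp only [hH, if_pos (by omega : 1 ≤ i + 1), Nat.add_sub_cancel]]
      rw [← Finset.mul_sum, ih (m + 1)]
    have hfinal : 1 / fp q (k + m) + q ^ (k + m + 1) * (1 / fp q (k + (m + 1)))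
        = 1 / fp q (k + 1 + m) := by
      have e : k + 1 + m = (k + m) + 1 := by omega
      have e2 : k + (m + 1) = (k + m) + 1 := by omega
      rw [e, e2, fp_succ]
      have n1 := hne (k + m)
      have n2 : (1 : K) - q ^ (k + m + 1) ≠ 0 := one_sub_pow_ne_zero hq (by omega)
      field_simp
      try ring
    calc ∑ j ∈ Finset.range (k + 1 + 1), F j
        = (∑ j ∈ Finset.range (k + 2), G j) + ∑ j ∈ Finset.range (k + 2), H j := hsum
      _ = 1 / fp q (k + m) + q ^ (k + m + 1) * (1 / fp q (k + (m + 1))) := by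
          rw [hGsum, hHsum]
      _ = 1 / fp q (k + 1 + m) := hfinal

end FieldLemma


lemma constantCoeff_qpoch (n : ℕ) : constantCoeff (qpoch n) = 1 := by
  simp [qpoch, map_prod]

/-- Cauchy's Durfee square identity:
`1/(q)_k = ∑_{j=0}^k q^{j²} [k choose j]_q 1/(q)_j`. -/
theorem durfee_square_identity (k : ℕ) :
    (qpoch k)⁻¹ =
      ∑ j ∈ Finset.range (k + 1),
        (X : PowerSeries ℚ) ^ (j ^ 2) * gauss k j * (qpoch j)⁻¹ := by
  set L := FractionRing (PowerSeries ℚ)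
  set φ := algebraMap (PowerSeries ℚ) L with hφdef
  have hφ : Function.Injective φ := IsFractionRing.injective _ _
  have hinv : ∀ A : PowerSeries ℚ, constantCoeff A ≠ 0 → φ A⁻¹ = (φ A)⁻¹ := by
    intro A h
    refine eq_inv_of_mul_eq_one_left ?_
    rw [← map_mul, mul_comm, PowerSeries.mul_inv_cancel A h, map_one]
  set q : L := φ X with hq'
  have hq : ∀ i, 1 ≤ i → q ^ i ≠ 1 := by
    intro i hi h
    rw [hq', ← map_pow, ← map_one φ] at h
    have h1 := hφ h
    have h2 : constantCoeff ((X : PowerSeries ℚ) ^ i) = 1 := by rw [h1]; simp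
    rw [map_pow, PowerSeries.constantCoeff_X, zero_pow (by omega)] at h2
    exact zero_ne_one h2
  have hpoch : ∀ n, φ (qpoch n) = fp q n := by
    intro n
    simp [qpoch, fp, map_prod, hq']
  have hqne : ∀ n, constantCoeff (qpoch n) ≠ 0 := fun n => by
    rw [constantCoeff_qpoch]; exact one_ne_zero
  apply hφ
  rw [map_sum, hinv _ (hqne k), hpoch k]
  have hterm : ∀ j ∈ Finset.range (k + 1),
      φ ((X : PowerSeries ℚ) ^ (j ^ 2) * gauss k j * (qpoch j)⁻¹)
        = q ^ (j * (j + 0)) * (fp q k / (fp q j * fp q (k - j))) / fp q (j + 0) := by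
    intro j _
    have hmulne : constantCoeff (qpoch j * qpoch (k - j)) ≠ 0 := by
      rw [map_mul, constantCoeff_qpoch, constantCoeff_qpoch]; norm_num
    simp only [gauss, map_mul, map_pow, hinv _ (hqne j), hinv _ hmulne, hpoch,
      Nat.add_zero, div_eq_mul_inv, mul_inv]
    rw [show j ^ 2 = j * (j + 0) by ring]
    ring
  rw [Finset.sum_congr rfl hterm, durfee_gen hq k 0, Nat.add_zero, one_div]
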